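/- The families SC(1,1) and SC'(1,1) of languages generated by semi-conditional grammars of degree (1,1) under the inclusive and exclusive definitions of the derivation step coincide: SC(1,1) = SC'(1,1). -/

import Mathlib

/-- Symbols: nonterminals `N` plus terminals `T`. -/
abbrev Symb (N T : Type) := N ⊕ T

/-- `alph w` is the set of symbols occurring in the string `w`. -/
def alph {α : Type} (w : List α) : Set α := {a | a ∈ w}

/-- A (nonerasing) random context grammar: finitely many productions
`(A → x, Per, For)` with `A ∈ N`, `x ∈ (N ∪ T)⁺`, `Per, For ⊆ N`. -/
structure RCG (N T : Type) where
  rules : Set (N × List (Symb N T) × Set N × Set N)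
  fin : rules.Finite
  ne : ∀ r ∈ rules, r.2.1 ≠ []
  start : N

/-- One derivation step of a random context grammar.  The flag `incl` tells whether
the rewritten symbol is included in the context check (`true`: conditions checked
against `alph (uAv)`; `false`: against `alph (uv)`). -/
def RCG.Step {N T : Type} (G : RCG N T) (incl : Bool)
    (s₁ s₂ : List (Symb N T)) : Prop :=
  ∃ A x Per For u v, (A, x, Per, For) ∈ G.rules ∧
    s₁ = u ++ Sum.inl A :: v ∧ s₂ = u ++ x ++ v ∧
    (∀ B ∈ Per, Sum.inl B ∈ alph (if incl then s₁ else u ++ v)) ∧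
    (∀ B ∈ For, Sum.inl B ∉ alph (if incl then s₁ else u ++ v))

/-- The language of a random context grammar (under the chosen derivation definition). -/
def RCG.Lang {N T : Type} (G : RCG N T) (incl : Bool) : Set (List T) :=
  {w | Relation.ReflTransGen (G.Step incl) [Sum.inl G.start] (w.map Sum.inr)}

/-- The family of random context languages over terminal alphabet `T`
(standard definition: rewritten symbol excluded from the context check). -/
def RC (T : Type) : Set (Set (List T)) :=
  {L | ∃ (N : Type) (G : RCG N T), G.Lang false = L}

/-- A (nonerasing) semi-conditional grammar of degree (1,1): productions
`(A → x, Per, For)` with `Per, For ⊆ N ∪ T` of cardinality at most one. -/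
structure SCG (N T : Type) where
  rules : Set (N × List (Symb N T) × Set (Symb N T) × Set (Symb N T))
  fin : rules.Finite
  ne : ∀ r ∈ rules, r.2.1 ≠ []
  per1 : ∀ r ∈ rules, r.2.2.1.Subsingleton
  for1 : ∀ r ∈ rules, r.2.2.2.Subsingleton
  start : N

/-- One derivation step of a semi-conditional grammar; `incl` as in `RCG.Step`. -/
def SCG.Step {N T : Type} (G : SCG N T) (incl : Bool)
    (s₁ s₂ : List (Symb N T)) : Prop :=
  ∃ A x Per For u v, (A, x, Per, For) ∈ G.rules ∧
    s₁ = u ++ Sum.inl A :: v ∧ s₂ = u ++ x ++ v ∧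
    Per ⊆ alph (if incl then s₁ else u ++ v) ∧
    (∀ a ∈ For, a ∉ alph (if incl then s₁ else u ++ v))

/-- The language of a semi-conditional grammar. -/
def SCG.Lang {N T : Type} (G : SCG N T) (incl : Bool) : Set (List T) :=
  {w | Relation.ReflTransGen (G.Step incl) [Sum.inl G.start] (w.map Sum.inr)}

/-- The family SC(1,1): inclusive derivation definition (context `alph (uAv)`). -/
def SC11 (T : Type) : Set (Set (List T)) :=
  {L | ∃ (N : Type) (G : SCG N T), G.Lang true = L}

/-- The family SC'(1,1): exclusive derivation definition (context `alph (uv)`). -/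
def SC11' (T : Type) : Set (Set (List T)) :=
  {L | ∃ (N : Type) (G : SCG N T), G.Lang false = L}

-- ==================== auxiliary ====================

lemma ite_false' {α : Sort u_1} (a b : α) : (if false = true then a else b) = b := rfl
lemma ite_true' {α : Sort u_1} (a b : α) : (if true = true then a else b) = a := rfl

lemma mem_alph {α : Type} {a : α} {w : List α} : a ∈ alph w ↔ a ∈ w := Iff.rfl

namespace SCGproof

variable {N T : Type}

/-- exclusive grammar simulating an inclusive one -/
def toExcl (G : SCG N T) : SCG N T where
  rules := (fun q : N × List (Symb N T) × Set (Symb N T) × Set (Symb N T) =>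
      (q.1, q.2.1, q.2.2.1 \ {Sum.inl q.1}, q.2.2.2)) ''
    {q ∈ G.rules | Sum.inl q.1 ∉ q.2.2.2}
  fin := ((G.fin.subset (Set.sep_subset _ _)).image _)
  ne := by rintro r ⟨q, ⟨hq, _⟩, rfl⟩; exact G.ne q hq
  per1 := by rintro r ⟨q, ⟨hq, _⟩, rfl⟩; exact (G.per1 q hq).anti Set.diff_subset
  for1 := by rintro r ⟨q, ⟨hq, _⟩, rfl⟩; exact G.for1 q hq
  start := G.start

lemma toExcl_step_iff (G : SCG N T) (s₁ s₂ : List (Symb N T)) :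
    G.Step true s₁ s₂ ↔ (toExcl G).Step false s₁ s₂ := by
  constructor
  · rintro ⟨A, x, Per, For, u, v, hr, h1, h2, hP, hF⟩
    simp only [if_true] at hP hF
    have hAs : Sum.inl A ∈ alph s₁ := by
      rw [h1]; simp [mem_alph]
    have hAF : Sum.inl A ∉ For := fun h => hF _ h hAs
    refine ⟨A, x, Per \ {Sum.inl A}, For, u, v,
      ⟨(A, x, Per, For), ⟨hr, hAF⟩, rfl⟩, h1, h2, ?_, ?_⟩
    · rintro c ⟨hc, hcA⟩
      have := hP hc
      rw [h1] at this
      simp only [mem_alph, List.mem_append, List.mem_cons, ite_false', ite_true'] at this ⊢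
      rcases this with h | h | h
      · exact Or.inl h
      · exact absurd h hcA
      · exact Or.inr h
    · intro a ha hmem
      refine hF a ha ?_
      rw [h1]
      simp only [mem_alph, List.mem_append, List.mem_cons, ite_false', ite_true'] at hmem ⊢
      tauto
  · rintro ⟨A, x, Per, For, u, v, ⟨⟨A', x', P', F'⟩, ⟨hq, hAF⟩, heq⟩, h1, h2, hP, hF⟩
    simp only [Prod.mk.injEq] at heq
    obtain ⟨rfl, rfl, rfl, rfl⟩ := heq
    simp only [ite_false', ite_true', if_true] at hP hF
    refine ⟨A', x', P', F', u, v, hq, h1, h2, ?_, ?_⟩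
    · intro c hc
      simp only [ite_true', if_true]
      by_cases hcA : c = Sum.inl A'
      · rw [h1, hcA]; simp [mem_alph]
      · have hcm : c ∈ alph (u ++ v) := hP ⟨hc, hcA⟩
        rw [h1]
        simp only [mem_alph, List.mem_append, List.mem_cons] at hcm ⊢
        tauto
    · intro a ha
      have haA : a ≠ Sum.inl A' := by rintro rfl; exact hAF ha
      intro hmem
      simp only [ite_true', if_true] at hmem
      refine hF a ha ?_
      rw [h1] at hmem
      simp only [mem_alph, List.mem_append, List.mem_cons] at hmem ⊢
      rcases hmem with h | h | h
      exacts [Or.inl h, absurd h haA, Or.inr h]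

lemma toExcl_lang (G : SCG N T) : (toExcl G).Lang false = G.Lang true := by
  have h : G.Step true = (toExcl G).Step false :=
    funext fun a => funext fun b => propext (toExcl_step_iff G a b)
  unfold SCG.Lang
  rw [h]
  rfl


abbrev RuleT (N T : Type) := N × List (Symb N T) × Set (Symb N T) × Set (Symb N T)

inductive Ctl (N T : Type) : Type where
  | idle (s : Symb N T)
  | pT (r : RuleT N T) (s : Symb N T)
  | pD (r : RuleT N T) (s : Symb N T)
  | pE (r : RuleT N T) (s : Symb N T)
  | tg (r : RuleT N T)
  | fchk (i : ℕ) (t : T)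

abbrev NN (N T : Type) := N ⊕ Ctl N T
abbrev Sym2 (N T : Type) := Symb (NN N T) T

def emb : Symb N T → Sym2 N T
  | Sum.inl A => Sum.inl (Sum.inl A)
  | Sum.inr t => Sum.inr t

def cS (c : Ctl N T) : Sym2 N T := Sum.inl (Sum.inr c)

lemma emb_inj : Function.Injective (emb : Symb N T → Sym2 N T) := by
  rintro (a | a) (b | b) h <;> simp [emb] at h <;> simp [h]

lemma emb_ne_cS (τ : Symb N T) (c : Ctl N T) : emb τ ≠ cS c := by
  cases τ <;> simp [emb, cS]

def held : Ctl N T → Symb N T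
  | .idle s => s
  | .pT _ s => s
  | .pD _ s => s
  | .pE _ s => s
  | .tg r => Sum.inl r.1
  | .fchk _ t => Sum.inr t

def unemb : Sym2 N T → Symb N T
  | Sum.inr t => Sum.inr t
  | Sum.inl (Sum.inl A) => Sum.inl A
  | Sum.inl (Sum.inr c) => held c

lemma unemb_emb (τ : Symb N T) : unemb (emb τ) = τ := by cases τ <;> rfl

lemma unemb_cS (c : Ctl N T) : unemb (cS c) = held c := rfl

variable (G : SCG N T)

noncomputable def ruleList : List (RuleT N T) := G.fin.toFinset.toList

lemma mem_ruleList {r : RuleT N T} : r ∈ ruleList G ↔ r ∈ G.rules := by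
  simp [ruleList, Set.Finite.mem_toFinset]

noncomputable def SL : List (Symb N T) :=
  Sum.inl G.start :: (ruleList G).flatMap (fun r => r.2.1)

lemma start_mem_SL : Sum.inl G.start ∈ SL G := by simp [SL]

lemma mem_SL_of_rhs {r : RuleT N T} (hr : r ∈ G.rules) {σ : Symb N T}
    (hσ : σ ∈ r.2.1) : σ ∈ SL G := by
  simp only [SL, List.mem_cons, List.mem_flatMap]
  exact Or.inr ⟨r, (mem_ruleList G).2 hr, hσ⟩

noncomputable def TL : List T :=
  (SL G).filterMap (fun σ => match σ with | Sum.inr t => some t | _ => none)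

lemma mem_TL {t : T} : t ∈ TL G ↔ Sum.inr t ∈ SL G := by
  simp only [TL, List.mem_filterMap]
  constructor
  · rintro ⟨(a | b), h1, h2⟩ <;> simp_all
  · intro h; exact ⟨Sum.inr t, h, rfl⟩

noncomputable def CL : List (Sym2 N T) :=
  (SL G).filterMap (fun σ => match σ with
    | Sum.inl A => some (Sum.inl (Sum.inl A)) | _ => none)

lemma mem_CL {y : Sym2 N T} :
    y ∈ CL G ↔ ∃ A, y = Sum.inl (Sum.inl A) ∧ Sum.inl A ∈ SL G := by
  simp only [CL, List.mem_filterMap]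
  constructor
  · rintro ⟨(a | b), h1, h2⟩ <;> simp_all
    exact h2 ▸ ⟨a, rfl, h1⟩
  · rintro ⟨A, rfl, h⟩; exact ⟨Sum.inl A, h, rfl⟩

noncomputable def KK : ℕ := (CL G).length

def dflt : Sym2 N T := Sum.inl (Sum.inl G.start)

/-- rule schemas -/
def fL (r : RuleT N T) : RuleT (NN N T) T :=
  match r.2.1 with
  | [] => (Sum.inr (.idle (Sum.inl r.1)), [cS (.idle (Sum.inl r.1))], ∅, ∅)
  | hd :: tl =>
      (Sum.inr (.idle (Sum.inl r.1)), cS (.idle hd) :: tl.map emb,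
        emb '' r.2.2.1, emb '' r.2.2.2)

def fR1 (r : RuleT N T) (s : Symb N T) : RuleT (NN N T) T :=
  (Sum.inr (.idle s), [cS (.pT r s)], ∅, ∅)

def fR2 (r : RuleT N T) (s : Symb N T) : RuleT (NN N T) T :=
  (Sum.inl r.1, [cS (.tg r)], {cS (.pT r s)}, {cS (.tg r)})

def fR3 (r : RuleT N T) (s : Symb N T) : RuleT (NN N T) T :=
  (Sum.inr (.pT r s), [cS (.pD r s)], {cS (.tg r)}, emb '' r.2.2.2)

def fR4 (r : RuleT N T) (s : Symb N T) : RuleT (NN N T) T :=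
  (Sum.inr (.pD r s), [cS (.pE r s)], emb '' (r.2.2.1 \ {s}), ∅)

def fR5 (r : RuleT N T) (s : Symb N T) : RuleT (NN N T) T :=
  (Sum.inr (.tg r), r.2.1.map emb, {cS (.pE r s)}, ∅)

def fR6 (r : RuleT N T) (s : Symb N T) : RuleT (NN N T) T :=
  (Sum.inr (.pE r s), [cS (.idle s)], ∅, {cS (.tg r)})

def fF1 (t : T) : RuleT (NN N T) T :=
  (Sum.inr (.idle (Sum.inr t)), [cS (.fchk 0 t)], ∅, ∅)

noncomputable def fFS (G : SCG N T) (t : T) (i : ℕ) : RuleT (NN N T) T :=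
  (Sum.inr (.fchk i t), [cS (.fchk (i+1) t)], ∅, {(CL G).getD i (dflt G)})

noncomputable def fF3 (G : SCG N T) (t : T) : RuleT (NN N T) T :=
  (Sum.inr (.fchk (KK G) t), [Sum.inr t], ∅, ∅)

noncomputable def rules2 : Set (RuleT (NN N T) T) :=
  (fL '' G.rules) ∪
  ((fun p : RuleT N T × Symb N T => fR1 p.1 p.2) '' (G.rules ×ˢ {σ | σ ∈ SL G})) ∪
  ((fun p : RuleT N T × Symb N T => fR2 p.1 p.2) '' (G.rules ×ˢ {σ | σ ∈ SL G})) ∪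
  ((fun p : RuleT N T × Symb N T => fR3 p.1 p.2) ''
      {p ∈ G.rules ×ˢ {σ | σ ∈ SL G} | p.2 ∉ p.1.2.2.2}) ∪
  ((fun p : RuleT N T × Symb N T => fR4 p.1 p.2) '' (G.rules ×ˢ {σ | σ ∈ SL G})) ∪
  ((fun p : RuleT N T × Symb N T => fR5 p.1 p.2) '' (G.rules ×ˢ {σ | σ ∈ SL G})) ∪
  ((fun p : RuleT N T × Symb N T => fR6 p.1 p.2) '' (G.rules ×ˢ {σ | σ ∈ SL G})) ∪
  (fF1 '' {t | t ∈ TL G}) ∪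
  ((fun p : T × ℕ => fFS G p.1 p.2) '' ({t | t ∈ TL G} ×ˢ {i | i ∈ List.range (KK G)})) ∪
  (fF3 G '' {t | t ∈ TL G})

noncomputable def G2 : SCG (NN N T) T where
  rules := rules2 G
  fin := by
    have hr := G.fin
    have hs : ({σ | σ ∈ SL G} : Set (Symb N T)).Finite := (SL G).finite_toSet
    have ht : ({t | t ∈ TL G} : Set T).Finite := (TL G).finite_toSet
    have hi : ({i | i ∈ List.range (KK G)} : Set ℕ).Finite := (List.range (KK G)).finite_toSet
    refine ((((((((((hr.image _).union ((hr.prod hs).image _)).union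
      ((hr.prod hs).image _)).union (((hr.prod hs).subset (Set.sep_subset _ _)).image _)).union
      ((hr.prod hs).image _)).union ((hr.prod hs).image _)).union
      ((hr.prod hs).image _)).union (ht.image _)).union ((ht.prod hi).image _)).union
      (ht.image _))
  ne := by
    rintro q (((((((((⟨r, hr, rfl⟩ | ⟨⟨r, s⟩, ⟨hr, hs⟩, rfl⟩) | ⟨⟨r, s⟩, ⟨hr, hs⟩, rfl⟩) |
        ⟨⟨r, s⟩, ⟨⟨hr, hs⟩, hnf⟩, rfl⟩) | ⟨⟨r, s⟩, ⟨hr, hs⟩, rfl⟩) | ⟨⟨r, s⟩, ⟨hr, hs⟩, rfl⟩) |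
        ⟨⟨r, s⟩, ⟨hr, hs⟩, rfl⟩) | ⟨t, ht, rfl⟩) | ⟨⟨t, i⟩, ⟨ht, hi⟩, rfl⟩) | ⟨t, ht, rfl⟩)
    · rcases hx : r.2.1 with _ | ⟨hd, tl⟩ <;> simp [fL, hx]
    · simp [fR1]
    · simp [fR2]
    · simp [fR3]
    · simp [fR4]
    · simp only [fR5]
      exact fun h => G.ne r hr (List.map_eq_nil_iff.mp h)
    · simp [fR6]
    · simp [fF1]
    · simp [fFS]
    · simp [fF3]
  per1 := by
    rintro q (((((((((⟨r, hr, rfl⟩ | ⟨⟨r, s⟩, ⟨hr, hs⟩, rfl⟩) | ⟨⟨r, s⟩, ⟨hr, hs⟩, rfl⟩) |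
        ⟨⟨r, s⟩, ⟨⟨hr, hs⟩, hnf⟩, rfl⟩) | ⟨⟨r, s⟩, ⟨hr, hs⟩, rfl⟩) | ⟨⟨r, s⟩, ⟨hr, hs⟩, rfl⟩) |
        ⟨⟨r, s⟩, ⟨hr, hs⟩, rfl⟩) | ⟨t, ht, rfl⟩) | ⟨⟨t, i⟩, ⟨ht, hi⟩, rfl⟩) | ⟨t, ht, rfl⟩)
    · rcases hx : r.2.1 with _ | ⟨hd, tl⟩
      · simp only [fL, hx]; exact Set.subsingleton_empty
      · simp only [fL, hx]; exact (G.per1 r hr).image _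
    · exact Set.subsingleton_empty
    · exact Set.subsingleton_singleton
    · exact Set.subsingleton_singleton
    · exact ((G.per1 _ hr).anti Set.diff_subset).image _
    · exact Set.subsingleton_singleton
    · exact Set.subsingleton_empty
    · exact Set.subsingleton_empty
    · exact Set.subsingleton_empty
    · exact Set.subsingleton_empty
  for1 := by
    rintro q (((((((((⟨r, hr, rfl⟩ | ⟨⟨r, s⟩, ⟨hr, hs⟩, rfl⟩) | ⟨⟨r, s⟩, ⟨hr, hs⟩, rfl⟩) |
        ⟨⟨r, s⟩, ⟨⟨hr, hs⟩, hnf⟩, rfl⟩) | ⟨⟨r, s⟩, ⟨hr, hs⟩, rfl⟩) | ⟨⟨r, s⟩, ⟨hr, hs⟩, rfl⟩) |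
        ⟨⟨r, s⟩, ⟨hr, hs⟩, rfl⟩) | ⟨t, ht, rfl⟩) | ⟨⟨t, i⟩, ⟨ht, hi⟩, rfl⟩) | ⟨t, ht, rfl⟩)
    · rcases hx : r.2.1 with _ | ⟨hd, tl⟩
      · simp only [fL, hx]; exact Set.subsingleton_empty
      · simp only [fL, hx]; exact (G.for1 r hr).image _
    · exact Set.subsingleton_empty
    · exact Set.subsingleton_singleton
    · exact (G.for1 _ hr).image _
    · exact Set.subsingleton_empty
    · exact Set.subsingleton_empty
    · exact Set.subsingleton_singleton
    · exact Set.subsingleton_empty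
    · exact Set.subsingleton_singleton
    · exact Set.subsingleton_empty
  start := Sum.inr (.idle (Sum.inl G.start))

-- ============ membership helpers ============

lemma mem2_L {r : RuleT N T} (hr : r ∈ G.rules) : fL r ∈ rules2 G :=
  Or.inl <| Or.inl <| Or.inl <| Or.inl <| Or.inl <| Or.inl <| Or.inl <| Or.inl <|
    Or.inl ⟨r, hr, rfl⟩

lemma mem2_R1 {r : RuleT N T} {s : Symb N T} (hr : r ∈ G.rules) (hs : s ∈ SL G) :
    fR1 r s ∈ rules2 G :=
  Or.inl <| Or.inl <| Or.inl <| Or.inl <| Or.inl <| Or.inl <| Or.inl <| Or.inl <|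
    Or.inr ⟨(r, s), ⟨hr, hs⟩, rfl⟩

lemma mem2_R2 {r : RuleT N T} {s : Symb N T} (hr : r ∈ G.rules) (hs : s ∈ SL G) :
    fR2 r s ∈ rules2 G :=
  Or.inl <| Or.inl <| Or.inl <| Or.inl <| Or.inl <| Or.inl <| Or.inl <|
    Or.inr ⟨(r, s), ⟨hr, hs⟩, rfl⟩

lemma mem2_R3 {r : RuleT N T} {s : Symb N T} (hr : r ∈ G.rules) (hs : s ∈ SL G)
    (hnf : s ∉ r.2.2.2) : fR3 r s ∈ rules2 G :=
  Or.inl <| Or.inl <| Or.inl <| Or.inl <| Or.inl <| Or.inl <|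
    Or.inr ⟨(r, s), ⟨⟨hr, hs⟩, hnf⟩, rfl⟩

lemma mem2_R4 {r : RuleT N T} {s : Symb N T} (hr : r ∈ G.rules) (hs : s ∈ SL G) :
    fR4 r s ∈ rules2 G :=
  Or.inl <| Or.inl <| Or.inl <| Or.inl <| Or.inl <| Or.inr ⟨(r, s), ⟨hr, hs⟩, rfl⟩

lemma mem2_R5 {r : RuleT N T} {s : Symb N T} (hr : r ∈ G.rules) (hs : s ∈ SL G) :
    fR5 r s ∈ rules2 G :=
  Or.inl <| Or.inl <| Or.inl <| Or.inl <| Or.inr ⟨(r, s), ⟨hr, hs⟩, rfl⟩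

lemma mem2_R6 {r : RuleT N T} {s : Symb N T} (hr : r ∈ G.rules) (hs : s ∈ SL G) :
    fR6 r s ∈ rules2 G :=
  Or.inl <| Or.inl <| Or.inl <| Or.inr ⟨(r, s), ⟨hr, hs⟩, rfl⟩

lemma mem2_F1 {t : T} (ht : t ∈ TL G) : fF1 t ∈ rules2 G :=
  Or.inl <| Or.inl <| Or.inr ⟨t, ht, rfl⟩

lemma mem2_FS {t : T} {i : ℕ} (ht : t ∈ TL G) (hi : i ∈ List.range (KK G)) :
    fFS G t i ∈ rules2 G :=
  Or.inl <| Or.inr ⟨(t, i), ⟨ht, hi⟩, rfl⟩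

lemma mem2_F3 {t : T} (ht : t ∈ TL G) : fF3 G t ∈ rules2 G :=
  Or.inr ⟨t, ht, rfl⟩

lemma mkStep {B x2 P2 F2} {u v s₁ s₂ : List (Sym2 N T)}
    (hq : (B, x2, P2, F2) ∈ rules2 G)
    (h1 : s₁ = u ++ Sum.inl B :: v) (h2 : s₂ = u ++ x2 ++ v)
    (hP : ∀ c ∈ P2, c ∈ s₁) (hF : ∀ c ∈ F2, c ∉ s₁) :
    (G2 G).Step true s₁ s₂ :=
  ⟨B, x2, P2, F2, u, v, hq, h1, h2, fun c hc => hP c hc, fun c hc => hF c hc⟩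

-- ============ completeness ============

def encW : List (Symb N T) → List (Sym2 N T)
  | [] => []
  | h :: tl => cS (.idle h) :: tl.map emb

lemma map_emb_inr (l : List T) : (l.map Sum.inr).map (emb (N := N)) = l.map Sum.inr := by
  rw [List.map_map]; rfl

lemma cS_notin_embs (c : Ctl N T) (l : List (Symb N T)) : cS c ∉ l.map emb := by
  intro h
  obtain ⟨τ, _, he⟩ := List.mem_map.mp h
  exact emb_ne_cS τ c he

lemma sim_step {w w' : List (Symb N T)} (hstep : G.Step false w w')
    (hok : ∀ σ ∈ w, σ ∈ SL G) :
    Relation.ReflTransGen ((G2 G).Step true) (encW w) (encW w') := by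
  obtain ⟨A, x, P, F, u, v, hq, h1, h2, hP, hF⟩ := hstep
  simp only [ite_false'] at hP hF
  have hxne : x ≠ [] := G.ne _ hq
  obtain ⟨hd, xtl, rfl⟩ := List.exists_cons_of_ne_nil hxne
  have hfL : fL (A, hd :: xtl, P, F) = (Sum.inr (.idle (Sum.inl A)),
      cS (.idle hd) :: xtl.map emb, emb '' P, emb '' F) := rfl
  cases u with
  | nil =>
    subst h1 h2
    refine Relation.ReflTransGen.single (mkStep G (hfL ▸ mem2_L G hq) (u := [])
      (v := v.map emb) rfl ?_ ?_ ?_)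
    · simp [encW, cS]
    · rintro c2 ⟨c, hc, rfl⟩
      have hcv : c ∈ v := by simpa [mem_alph] using hP hc
      exact List.mem_cons_of_mem _ (List.mem_map_of_mem (f := emb) hcv)
    · rintro c2 ⟨c, hc, rfl⟩
      have hcv : c ∉ alph v := fun h => hF c hc (by simpa [mem_alph] using h)
      simp only [encW, List.nil_append, List.mem_cons, List.mem_map]
      rintro (h | ⟨τ, hτ, hee⟩)
      · exact emb_ne_cS c _ h
      · have hτc : τ = c := emb_inj hee
        exact hcv (mem_alph.mpr (hτc ▸ hτ))
  | cons h u' =>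
    subst h1 h2
    have hhSL : h ∈ SL G := hok h (by simp)
    have hhF : h ∉ F := fun hh => hF h hh (by simp [mem_alph])
    set r0 : RuleT N T := (A, hd :: xtl, P, F) with hr0
    -- the six strings
    set tail0 : List (Sym2 N T) :=
      u'.map emb ++ Sum.inl (Sum.inl A) :: v.map emb with htail0
    set tail1 : List (Sym2 N T) :=
      u'.map emb ++ cS (.tg r0) :: v.map emb with htail1
    set tail2 : List (Sym2 N T) :=
      u'.map emb ++ (hd :: xtl).map emb ++ v.map emb with htail2
    have henc0 : encW ((h :: u') ++ Sum.inl A :: v) = cS (.idle h) :: tail0 := by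
      simp [encW, tail0, emb]
    have henc2 : encW ((h :: u') ++ (hd :: xtl) ++ v) = cS (.idle h) :: tail2 := by
      simp [encW, tail2]
    rw [henc0, henc2]
    -- raw facts
    have hnot_cs_tail0 : ∀ c : Ctl N T, cS c ∉ tail0 := by
      intro c hc
      rw [htail0] at hc
      rcases List.mem_append.mp hc with h1 | h1
      · exact cS_notin_embs c u' h1
      · rcases List.mem_cons.mp h1 with h2 | h2
        · simp [cS] at h2
        · exact cS_notin_embs c v h2
    have st1 : (G2 G).Step true (cS (.idle h) :: tail0) (cS (.pT r0 h) :: tail0) :=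
      mkStep G (mem2_R1 G hq hhSL) (u := []) (v := tail0) rfl rfl
        (by simp [fR1]) (by simp [fR1])
    have st2 : (G2 G).Step true (cS (.pT r0 h) :: tail0) (cS (.pT r0 h) :: tail1) := by
      refine mkStep G (mem2_R2 G hq hhSL) (u := cS (.pT r0 h) :: u'.map emb)
        (v := v.map emb) (by simp [tail0, cS]; rfl) (by simp [tail1, cS]) ?_ ?_
      · intro c hc
        simp only [fR2, Set.mem_singleton_iff] at hc
        simp [hc]
      · intro c hc
        simp only [fR2, Set.mem_singleton_iff] at hc
        subst hc
        simp only [List.mem_cons]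
        rintro (h | h)
        · simp [cS] at h
        · exact hnot_cs_tail0 _ h
    have st3 : (G2 G).Step true (cS (.pT r0 h) :: tail1) (cS (.pD r0 h) :: tail1) := by
      refine mkStep G (mem2_R3 G hq hhSL hhF) (u := []) (v := tail1) rfl rfl ?_ ?_
      · intro c hc
        simp only [fR3, Set.mem_singleton_iff] at hc
        subst hc
        simp [tail1]
      · rintro c2 hc2
        obtain ⟨c, hc, rfl⟩ := hc2
        have hcuv : c ∉ alph ((h :: u') ++ v) := hF c hc
        have hcu' : c ∉ u' := fun hm => hcuv (by simp [mem_alph, hm])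
        have hcv : c ∉ v := fun hm => hcuv (by simp [mem_alph, hm])
        intro hmem
        rcases List.mem_cons.mp hmem with h1 | h1
        · exact emb_ne_cS c _ h1
        · rw [htail1] at h1
          rcases List.mem_append.mp h1 with h2 | h2
          · obtain ⟨τ, hτ, he⟩ := List.mem_map.mp h2
            exact hcu' (emb_inj he ▸ hτ)
          · rcases List.mem_cons.mp h2 with h3 | h3
            · exact emb_ne_cS c _ h3
            · obtain ⟨τ, hτ, he⟩ := List.mem_map.mp h3
              exact hcv (emb_inj he ▸ hτ)
    have st4 : (G2 G).Step true (cS (.pD r0 h) :: tail1) (cS (.pE r0 h) :: tail1) := by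
      refine mkStep G (mem2_R4 G hq hhSL) (u := []) (v := tail1) rfl rfl ?_ ?_
      · rintro c2 hc2
        obtain ⟨c, ⟨hcP, hch⟩, rfl⟩ := hc2
        have hch' : c ≠ h := by simpa using hch
        have hm : c ∈ alph ((h :: u') ++ v) := hP hcP
        simp only [mem_alph, List.mem_append, List.mem_cons] at hm
        refine List.mem_cons_of_mem _ ?_
        rw [htail1]
        rcases hm with (rfl | hcu) | hcv
        · exact absurd rfl hch'
        · exact List.mem_append.mpr (Or.inl (List.mem_map_of_mem (f := emb) hcu))
        · exact List.mem_append.mpr (Or.inr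
            (List.mem_cons_of_mem _ (List.mem_map_of_mem (f := emb) hcv)))
      · intro c hc
        simp at hc
    have st5 : (G2 G).Step true (cS (.pE r0 h) :: tail1) (cS (.pE r0 h) :: tail2) := by
      refine mkStep G (mem2_R5 G hq hhSL) (u := cS (.pE r0 h) :: u'.map emb)
        (v := v.map emb) (by simp [tail1, cS]) (by simp [tail2, cS]; rfl) ?_ ?_
      · intro c hc
        simp only [fR5, Set.mem_singleton_iff] at hc
        simp [hc]
      · intro c hc
        simp at hc
    have st6 : (G2 G).Step true (cS (.pE r0 h) :: tail2) (cS (.idle h) :: tail2) := by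
      refine mkStep G (mem2_R6 G hq hhSL) (u := []) (v := tail2) rfl rfl ?_ ?_
      · intro c hc
        simp at hc
      · intro c hc
        simp only [fR6, Set.mem_singleton_iff] at hc
        subst hc
        intro hmem
        rcases List.mem_cons.mp hmem with h1 | h1
        · simp [cS] at h1
        · rw [htail2] at h1
          rcases List.mem_append.mp h1 with h2 | h2
          · rcases List.mem_append.mp h2 with h3 | h3
            · exact cS_notin_embs _ _ h3
            · exact cS_notin_embs _ _ h3
          · exact cS_notin_embs _ _ h2
    exact (((((Relation.ReflTransGen.refl.tail st1).tail st2).tail st3).tail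
      st4).tail st5).tail st6


lemma fchain (t : T) (ht : t ∈ TL G) (tl2 : List (Sym2 N T))
    (htl : ∀ y ∈ tl2, ∃ t' : T, y = Sum.inr t') :
    ∀ n i, i + n = KK G →
      Relation.ReflTransGen ((G2 G).Step true)
        (cS (.fchk i t) :: tl2) (cS (.fchk (KK G) t) :: tl2) := by
  intro n
  induction n with
  | zero =>
    intro i hi
    rw [Nat.add_zero] at hi
    rw [hi]
  | succ n ih =>
    intro i hi
    have hiK : i < KK G := by omega
    have hgm : (CL G).getD i (dflt G) ∈ CL G := by
      rw [List.getD_eq_getElem _ _ hiK]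
      exact List.getElem_mem _
    obtain ⟨A, hAe, _⟩ := (mem_CL G).mp hgm
    have st : (G2 G).Step true (cS (.fchk i t) :: tl2) (cS (.fchk (i+1) t) :: tl2) := by
      refine mkStep G (mem2_FS G ht (List.mem_range.mpr hiK)) (u := [])
        (v := tl2) rfl rfl ?_ ?_
      · intro c hc
        simp at hc
      · intro c hc
        simp only [fFS, Set.mem_singleton_iff] at hc
        subst hc
        rw [hAe]
        intro hmem
        rcases List.mem_cons.mp hmem with h1 | h1
        · simp [cS] at h1
        · obtain ⟨t', ht'⟩ := htl _ h1
          simp at ht'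
    exact (Relation.ReflTransGen.single st).trans (ih (i+1) (by omega))

lemma complete {w : List T} (hw : w ∈ G.Lang false) : w ∈ (G2 G).Lang true := by
  have main : ∀ z, Relation.ReflTransGen (G.Step false) [Sum.inl G.start] z →
      (∀ σ ∈ z, σ ∈ SL G) ∧ z ≠ [] ∧
      Relation.ReflTransGen ((G2 G).Step true) [Sum.inl (G2 G).start] (encW z) := by
    intro z hz
    induction hz with
    | refl =>
      refine ⟨?_, by simp, ?_⟩
      · intro σ hσ
        simp only [List.mem_singleton] at hσ
        rw [hσ]; exact start_mem_SL G
      · exact Relation.ReflTransGen.refl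
    | @tail b c hb hstep ih =>
      obtain ⟨hok, hne, hrtg⟩ := ih
      have hst2 := hstep
      obtain ⟨A, x, P, F, u, v, hq, h1, h2c, _, _⟩ := hst2
      refine ⟨?_, ?_, hrtg.trans (sim_step G hstep hok)⟩
      · intro σ hσ
        rw [h2c] at hσ
        rcases List.mem_append.mp hσ with h3 | h3
        · rcases List.mem_append.mp h3 with h4 | h4
          · exact hok σ (by rw [h1]; exact List.mem_append.mpr (Or.inl h4))
          · exact mem_SL_of_rhs G hq h4
        · exact hok σ (by
            rw [h1]
            exact List.mem_append.mpr (Or.inr (List.mem_cons_of_mem _ h3)))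
      · rw [h2c]
        have := G.ne _ hq
        intro hemp
        simp only [List.append_eq_nil_iff] at hemp
        exact this hemp.1.2
  obtain ⟨hok, hne, hrtg⟩ := main _ hw
  cases w with
  | nil => simp at hne
  | cons t wt =>
    have hts : Sum.inr t ∈ SL G := hok _ (by simp)
    have htTL : t ∈ TL G := (mem_TL G).mpr hts
    set tl2 : List (Sym2 N T) := (wt.map Sum.inr).map emb with htl2
    have htl2r : ∀ y ∈ tl2, ∃ t' : T, y = Sum.inr t' := by
      intro y hy
      rw [htl2] at hy
      obtain ⟨τ, hτ, rfl⟩ := List.mem_map.mp hy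
      obtain ⟨t', _, rfl⟩ := List.mem_map.mp hτ
      exact ⟨t', rfl⟩
    have henc : encW ((t :: wt).map Sum.inr) = cS (.idle (Sum.inr t)) :: tl2 := by
      simp [encW, htl2]
    have stF1 : (G2 G).Step true (cS (.idle (Sum.inr t)) :: tl2)
        (cS (.fchk 0 t) :: tl2) :=
      mkStep G (mem2_F1 G htTL) (u := []) (v := tl2) rfl rfl
        (fun c hc => (Set.notMem_empty c hc).elim)
        (fun c hc => (Set.notMem_empty c hc).elim)
    have hch := fchain G t htTL tl2 htl2r (KK G) 0 (by omega)
    have stF3 : (G2 G).Step true (cS (.fchk (KK G) t) :: tl2)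
        (Sum.inr t :: tl2) :=
      mkStep G (mem2_F3 G htTL) (u := []) (v := tl2) rfl rfl
        (fun c hc => (Set.notMem_empty c hc).elim)
        (fun c hc => (Set.notMem_empty c hc).elim)
    have hfinal : (t :: wt).map Sum.inr = Sum.inr t :: tl2 := by
      rw [htl2, map_emb_inr]
      simp
    show Relation.ReflTransGen ((G2 G).Step true) [Sum.inl (G2 G).start]
      ((t :: wt).map Sum.inr)
    rw [hfinal]
    rw [henc] at hrtg
    exact ((hrtg.tail stF1).trans hch).tail stF3


-- ============ soundness ============

def RawOK (tl : List (Sym2 N T)) : Prop := ∀ σ ∈ tl, ∃ τ, τ ∈ SL G ∧ σ = emb τ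

def FactF (r : RuleT N T) (h : Symb N T) (l : List (Sym2 N T)) : Prop :=
  ∀ d ∈ r.2.2.2, d ≠ h ∧ emb d ∉ l

def FactP (r : RuleT N T) (h : Symb N T) (l : List (Sym2 N T)) : Prop :=
  ∀ c ∈ r.2.2.1, c = h ∨ emb c ∈ l

def Inv (s : List (Sym2 N T)) : Prop :=
  (∀ σ ∈ s, ∃ t : T, σ = Sum.inr t) ∨
  ∃ h, h ∈ SL G ∧ (
    (∃ tl, s = cS (.idle h) :: tl ∧ RawOK G tl) ∨
    (∃ r, r ∈ G.rules ∧ ∃ tl, s = cS (.pT r h) :: tl ∧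
       (RawOK G tl ∨ ∃ t1 t2, tl = t1 ++ cS (.tg r) :: t2 ∧ RawOK G t1 ∧ RawOK G t2)) ∨
    (∃ r, r ∈ G.rules ∧ ∃ t1 t2, s = cS (.pD r h) :: (t1 ++ cS (.tg r) :: t2) ∧
       RawOK G t1 ∧ RawOK G t2 ∧ FactF r h (t1 ++ t2)) ∨
    (∃ r, r ∈ G.rules ∧ ∃ tl, s = cS (.pE r h) :: tl ∧
       ((∃ t1 t2, tl = t1 ++ cS (.tg r) :: t2 ∧ RawOK G t1 ∧ RawOK G t2 ∧
          FactF r h (t1 ++ t2) ∧ FactP r h (t1 ++ t2)) ∨ RawOK G tl)) ∨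
    (∃ t : T, h = Sum.inr t ∧ ∃ i, i ≤ KK G ∧ ∃ tl, s = cS (.fchk i t) :: tl ∧
       RawOK G tl ∧ ∀ j < i, (CL G).getD j (dflt G) ∉ tl))

lemma RawOK_append {a b : List (Sym2 N T)} :
    RawOK G (a ++ b) ↔ RawOK G a ∧ RawOK G b := by
  constructor
  · intro h
    exact ⟨fun σ hσ => h σ (List.mem_append.mpr (Or.inl hσ)),
           fun σ hσ => h σ (List.mem_append.mpr (Or.inr hσ))⟩
  · rintro ⟨h1, h2⟩ σ hσ
    rcases List.mem_append.mp hσ with h3 | h3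
    exacts [h1 σ h3, h2 σ h3]

lemma RawOK_cons {a : Sym2 N T} {tl : List (Sym2 N T)} :
    RawOK G (a :: tl) ↔ (∃ τ, τ ∈ SL G ∧ a = emb τ) ∧ RawOK G tl := by
  constructor
  · intro h
    exact ⟨h a (by simp), fun σ hσ => h σ (List.mem_cons_of_mem _ hσ)⟩
  · rintro ⟨h1, h2⟩ σ hσ
    rcases List.mem_cons.mp hσ with rfl | h3
    exacts [h1, h2 σ h3]

lemma RawOK_nil : RawOK G ([] : List (Sym2 N T)) := by intro σ hσ; simp at hσ

lemma RawOK_map_emb {l : List (Symb N T)} (hl : ∀ τ ∈ l, τ ∈ SL G) :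
    RawOK G (l.map emb) := by
  intro σ hσ
  obtain ⟨τ, hτ, rfl⟩ := List.mem_map.mp hσ
  exact ⟨τ, hl τ hτ, rfl⟩

lemma rawOK_no_cS {tl : List (Sym2 N T)} (h : RawOK G tl) (c : Ctl N T) :
    cS c ∉ tl := by
  intro hc
  obtain ⟨τ, _, he⟩ := h _ hc
  exact emb_ne_cS τ c he.symm

lemma rawOK_unemb_mem {tl : List (Sym2 N T)} {d : Symb N T} (h : RawOK G tl)
    (hm : d ∈ tl.map unemb) : emb d ∈ tl := by
  obtain ⟨σ, hσ, rfl⟩ := List.mem_map.mp hm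
  obtain ⟨τ, _, rfl⟩ := h σ hσ
  rw [unemb_emb]
  exact hσ

lemma mem_map_unemb_of_emb {c : Symb N T} {l : List (Sym2 N T)} (h : emb c ∈ l) :
    c ∈ l.map unemb := by
  have := List.mem_map_of_mem (f := unemb) h
  rwa [unemb_emb] at this

lemma map_unemb_emb (l : List (Symb N T)) : (l.map emb).map unemb = l := by
  induction l with
  | nil => rfl
  | cons a l ih => simp [unemb_emb, ih]

lemma map_comp_unemb_emb (l : List (Symb N T)) : l.map (unemb ∘ emb) = l := by
  induction l with
  | nil => rfl
  | cons a l ih => simp [Function.comp, unemb_emb, ih]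

lemma cS_inj {c c' : Ctl N T} (h : cS c = cS c') : c = c' := by
  simpa [cS] using h

lemma cons_eq_append_cases {α : Type} {y X : α} {tl u v : List α}
    (h : y :: tl = u ++ X :: v) :
    (u = [] ∧ y = X ∧ tl = v) ∨ ∃ u', u = y :: u' ∧ tl = u' ++ X :: v := by
  cases u with
  | nil =>
    simp only [List.nil_append, List.cons.injEq] at h
    exact Or.inl ⟨rfl, h.1, h.2⟩
  | cons a u' =>
    simp only [List.cons_append, List.cons.injEq] at h
    exact Or.inr ⟨u', by rw [h.1], h.2⟩

lemma unique_split {α : Type} {X : α} :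
    ∀ {t1 : List α} {t2 u' v : List α}, t1 ++ X :: t2 = u' ++ X :: v →
      X ∉ t1 → X ∉ t2 → t1 = u' ∧ t2 = v := by
  intro t1
  induction t1 with
  | nil =>
    intro t2 u' v h h1 h2
    cases u' with
    | nil => simpa using h
    | cons a u'' =>
      simp only [List.nil_append, List.cons_append, List.cons.injEq] at h
      exact absurd (h.2 ▸ List.mem_append.mpr (Or.inr (by simp))) h2
  | cons b t1' ih =>
    intro t2 u' v h h1 h2
    cases u' with
    | nil =>
      simp only [List.cons_append, List.nil_append, List.cons.injEq] at h
      exact absurd (h.1 ▸ @List.mem_cons_self _ b t1') h1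
    | cons a u'' =>
      simp only [List.cons_append, List.cons.injEq] at h
      obtain ⟨rfl, h⟩ := h
      obtain ⟨h3, h4⟩ := ih h (fun hm => h1 (List.mem_cons_of_mem _ hm)) h2
      exact ⟨by rw [h3], h4⟩


lemma tl_tagged_cs {t1 t2 : List (Sym2 N T)} {r' : RuleT N T}
    (h1 : RawOK G t1) (h2 : RawOK G t2) :
    ∀ c', cS c' ∈ t1 ++ cS (.tg r') :: t2 → c' = .tg r' := by
  intro c' hm
  rcases List.mem_append.mp hm with h | h
  · exact absurd h (rawOK_no_cS G h1 c')
  · rcases List.mem_cons.mp h with h | h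
    · exact cS_inj h
    · exact absurd h (rawOK_no_cS G h2 c')

lemma pin_cpu_raw {c c0 : Ctl N T} {tl u v : List (Sym2 N T)}
    (h1 : cS c0 :: tl = u ++ Sum.inl (Sum.inr c) :: v) (hraw : RawOK G tl) :
    c0 = c ∧ u = [] ∧ v = tl := by
  rcases cons_eq_append_cases h1 with ⟨hu, hy, htlv⟩ | ⟨u', hu, htl'⟩
  · exact ⟨cS_inj hy, hu, htlv.symm⟩
  · exact absurd (htl' ▸ List.mem_append.mpr (Or.inr (by simp [cS])))
      (rawOK_no_cS G hraw c)

lemma pin_cpu_tag {c c0 : Ctl N T} {t1 t2 u v : List (Sym2 N T)} {r' : RuleT N T}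
    (h1 : cS c0 :: (t1 ++ cS (.tg r') :: t2) = u ++ Sum.inl (Sum.inr c) :: v)
    (hr1 : RawOK G t1) (hr2 : RawOK G t2) (hc : c ≠ .tg r') :
    c0 = c ∧ u = [] ∧ v = t1 ++ cS (.tg r') :: t2 := by
  rcases cons_eq_append_cases h1 with ⟨hu, hy, htlv⟩ | ⟨u', hu, htl'⟩
  · exact ⟨cS_inj hy, hu, htlv.symm⟩
  · have hmem : cS c ∈ t1 ++ cS (.tg r') :: t2 :=
      htl' ▸ List.mem_append.mpr (Or.inr (by simp [cS]))
    exact absurd (tl_tagged_cs G hr1 hr2 c hmem) hc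

lemma pin_per {c c0 : Ctl N T} {tl : List (Sym2 N T)}
    (hmem : cS c ∈ cS c0 :: tl)
    (htl : cS c ∉ tl) : c0 = c := by
  rcases List.mem_cons.mp hmem with h | h
  · exact (cS_inj h).symm
  · exact absurd h htl

lemma preserve {s₁ s₂ : List (Sym2 N T)} (hInv : Inv G s₁)
    (hstep : (G2 G).Step true s₁ s₂) :
    Inv G s₂ ∧ (s₁.map unemb = s₂.map unemb ∨
      G.Step false (s₁.map unemb) (s₂.map unemb)) := by
  obtain ⟨B, x2, P2, F2, u, v, hq, h1, h2, hPc, hFc⟩ := hstep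
  have hP : ∀ c ∈ P2, c ∈ s₁ := fun c hc => hPc hc
  have hF : ∀ c ∈ F2, c ∉ s₁ := fun c hc h => hFc c hc h
  clear hPc hFc
  rcases hInv with hterm | hrest
  · exfalso
    have hBs : Sum.inl B ∈ s₁ := by rw [h1]; simp
    obtain ⟨t, ht⟩ := hterm _ hBs
    simp at ht
  rcases hq with (((((((((⟨r, hr, heq⟩ | ⟨⟨r, s⟩, ⟨hr, hs⟩, heq⟩) | ⟨⟨r, s⟩, ⟨hr, hs⟩, heq⟩) |
      ⟨⟨r, s⟩, ⟨⟨hr, hs⟩, hnf⟩, heq⟩) | ⟨⟨r, s⟩, ⟨hr, hs⟩, heq⟩) | ⟨⟨r, s⟩, ⟨hr, hs⟩, heq⟩) |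
      ⟨⟨r, s⟩, ⟨hr, hs⟩, heq⟩) | ⟨t, ht, heq⟩) | ⟨⟨t, i⟩, ⟨ht, hi⟩, heq⟩) | ⟨t, ht, heq⟩)
  -- ===== fL =====
  · obtain ⟨hd, xtl, hx1⟩ := List.exists_cons_of_ne_nil (G.ne r hr)
    have hfLr : fL r = (Sum.inr (Ctl.idle (Sum.inl r.1)),
        cS (.idle hd) :: xtl.map emb, emb '' r.2.2.1, emb '' r.2.2.2) := by
      unfold fL; rw [hx1]
    rw [hfLr] at heq
    simp only [Prod.mk.injEq] at heq
    obtain ⟨hB, hx2, hP2, hF2⟩ := heq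
    subst hB; subst hx2; subst hP2; subst hF2
    obtain ⟨h0, hh0, hcases⟩ := hrest
    rcases hcases with ⟨tl, hs1, hraw⟩ | ⟨r', hr', tl, hs1, hsub⟩ |
        ⟨r', hr', t1, t2, hs1, hr1, hr2, hff⟩ | ⟨r', hr', tl, hs1, hsub⟩ |
        ⟨t0, ht0, i, hiK, tl, hs1, hraw, hchk⟩
    · -- idle : the real case
      rw [hs1] at h1
      obtain ⟨hc0, hu, hv⟩ := pin_cpu_raw G h1 hraw
      simp only [Ctl.idle.injEq] at hc0
      subst hc0; subst hu; subst hv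
      constructor
      · refine Or.inr ⟨hd, mem_SL_of_rhs G hr (by rw [hx1]; simp), Or.inl
          ⟨xtl.map emb ++ v, by rw [h2]; simp, ?_⟩⟩
        rw [RawOK_append]
        refine ⟨RawOK_map_emb G (fun τ hτ => mem_SL_of_rhs G hr
          (by rw [hx1]; exact List.mem_cons_of_mem _ hτ)), hraw⟩
      · refine Or.inr ⟨r.1, r.2.1, r.2.2.1, r.2.2.2, [], v.map unemb, hr, ?_, ?_, ?_, ?_⟩
        · rw [hs1]; simp [unemb_cS, held]
        · rw [h2, hx1]
          simp only [List.nil_append, List.map_append, List.map_cons, List.map_map]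
          simp only [List.nil_append, List.map_append, List.map_cons, List.map_map,
            map_comp_unemb_emb]
          rfl
        · intro c hc
          have : emb c ∈ s₁ := hP _ ⟨c, hc, rfl⟩
          rw [hs1] at this
          rcases List.mem_cons.mp this with h3 | h3
          · exact absurd h3 (emb_ne_cS c _)
          · simp only [ite_false', List.nil_append]
            exact mem_map_unemb_of_emb h3
        · intro d hd2 hmem
          simp only [ite_false', List.nil_append, mem_alph] at hmem
          have : emb d ∈ v := rawOK_unemb_mem G hraw hmem
          exact hF _ ⟨d, hd2, rfl⟩ (by rw [hs1]; exact List.mem_cons_of_mem _ this)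
    · -- pT : dismiss
      rw [hs1] at h1
      rcases hsub with hraw | ⟨t1, t2, htl12, hr1, hr2⟩
      · obtain ⟨hc0, -, -⟩ := pin_cpu_raw G h1 hraw
        simp at hc0
      · rw [htl12] at h1
        obtain ⟨hc0, -, -⟩ := pin_cpu_tag G h1 hr1 hr2 (by simp)
        simp at hc0
    · -- pD : dismiss
      rw [hs1] at h1
      obtain ⟨hc0, -, -⟩ := pin_cpu_tag G h1 hr1 hr2 (by simp)
      simp at hc0
    · -- pE : dismiss
      rw [hs1] at h1
      rcases hsub with ⟨t1, t2, htl12, hr1, hr2, hffp⟩ | hraw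
      · rw [htl12] at h1
        obtain ⟨hc0, -, -⟩ := pin_cpu_tag G h1 hr1 hr2 (by simp)
        simp at hc0
      · obtain ⟨hc0, -, -⟩ := pin_cpu_raw G h1 hraw
        simp at hc0
    · -- fchk : dismiss
      rw [hs1] at h1
      obtain ⟨hc0, -, -⟩ := pin_cpu_raw G h1 hraw
      simp at hc0
  -- ===== fR1 =====
  · simp only [fR1, Prod.mk.injEq] at heq
    obtain ⟨hB, hx2, hP2, hF2⟩ := heq
    subst hB; subst hx2; subst hP2; subst hF2
    obtain ⟨h0, hh0, hcases⟩ := hrest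
    rcases hcases with ⟨tl, hs1, hraw⟩ | ⟨r', hr', tl, hs1, hsub⟩ |
        ⟨r', hr', t1, t2, hs1, hr1, hr2, hff⟩ | ⟨r', hr', tl, hs1, hsub⟩ |
        ⟨t0, ht0, i, hiK, tl, hs1, hraw, hchk⟩
    · rw [hs1] at h1
      obtain ⟨hc0, hu, hv⟩ := pin_cpu_raw G h1 hraw
      simp only [Ctl.idle.injEq] at hc0
      subst hc0; subst hu; subst hv
      constructor
      · exact Or.inr ⟨h0, hh0, Or.inr (Or.inl ⟨r, hr, v, by rw [h2]; rfl, Or.inl hraw⟩)⟩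
      · left; rw [hs1, h2]; rfl
    · rw [hs1] at h1
      rcases hsub with hraw | ⟨t1, t2, htl12, hr1, hr2⟩
      · obtain ⟨hc0, -, -⟩ := pin_cpu_raw G h1 hraw
        simp at hc0
      · rw [htl12] at h1
        obtain ⟨hc0, -, -⟩ := pin_cpu_tag G h1 hr1 hr2 (by simp)
        simp at hc0
    · rw [hs1] at h1
      obtain ⟨hc0, -, -⟩ := pin_cpu_tag G h1 hr1 hr2 (by simp)
      simp at hc0
    · rw [hs1] at h1
      rcases hsub with ⟨t1, t2, htl12, hr1, hr2, hffp⟩ | hraw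
      · rw [htl12] at h1
        obtain ⟨hc0, -, -⟩ := pin_cpu_tag G h1 hr1 hr2 (by simp)
        simp at hc0
      · obtain ⟨hc0, -, -⟩ := pin_cpu_raw G h1 hraw
        simp at hc0
    · rw [hs1] at h1
      obtain ⟨hc0, -, -⟩ := pin_cpu_raw G h1 hraw
      simp at hc0
  -- ===== fR2 =====
  · simp only [fR2, Prod.mk.injEq] at heq
    obtain ⟨hB, hx2, hP2, hF2⟩ := heq
    subst hB; subst hx2; subst hP2; subst hF2
    have hPT : cS (.pT r s) ∈ s₁ := hP _ rfl
    have hTG : cS (.tg r) ∉ s₁ := hF _ rfl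
    obtain ⟨h0, hh0, hcases⟩ := hrest
    rcases hcases with ⟨tl, hs1, hraw⟩ | ⟨r', hr', tl, hs1, hsub⟩ |
        ⟨r', hr', t1, t2, hs1, hr1, hr2, hff⟩ | ⟨r', hr', tl, hs1, hsub⟩ |
        ⟨t0, ht0, i, hiK, tl, hs1, hraw, hchk⟩
    · rw [hs1] at hPT
      have hc0 := pin_per hPT (rawOK_no_cS G hraw _)
      simp at hc0
    · rcases hsub with hraw | ⟨t1, t2, htl12, hr1, hr2⟩
      · -- the real case
        rw [hs1] at hPT
        have hc0 := pin_per hPT (rawOK_no_cS G hraw _)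
        simp only [Ctl.pT.injEq] at hc0
        obtain ⟨rfl, rfl⟩ := hc0
        rw [hs1] at h1
        rcases cons_eq_append_cases h1 with ⟨hu, hy, htlv⟩ | ⟨u', hu, htl'⟩
        · simp [cS] at hy
        rw [htl'] at hraw
        rw [RawOK_append] at hraw
        obtain ⟨hrawu, hrawv⟩ := hraw
        rw [RawOK_cons] at hrawv
        obtain ⟨-, hrawv⟩ := hrawv
        constructor
        · refine Or.inr ⟨h0, hh0, Or.inr (Or.inl ⟨r', hr, u' ++ cS (.tg r') :: v, ?_,
            Or.inr ⟨u', v, rfl, hrawu, hrawv⟩⟩)⟩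
          rw [h2, hu]; simp
        · left
          rw [hs1, htl', h2, hu]
          simp only [List.map_cons, List.map_append, List.cons_append,
            List.singleton_append, List.nil_append, List.map_nil, List.append_nil,
            List.append_assoc]
          rfl
      · rw [hs1] at hPT
        have hc0 := pin_per hPT (fun hmem => by
          have := tl_tagged_cs G hr1 hr2 _ (htl12 ▸ hmem)
          simp at this)
        simp only [Ctl.pT.injEq] at hc0
        obtain ⟨rfl, rfl⟩ := hc0
        exact absurd (by
          rw [hs1, htl12]
          exact List.mem_cons_of_mem _ (List.mem_append.mpr (Or.inr (by simp)))) hTG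
    · rw [hs1] at hPT
      have hc0 := pin_per hPT (fun hmem => by
        have := tl_tagged_cs G hr1 hr2 _ hmem
        simp at this)
      simp at hc0
    · rcases hsub with ⟨t1, t2, htl12, hr1, hr2, hffp⟩ | hraw
      · rw [hs1] at hPT
        have hc0 := pin_per hPT (fun hmem => by
          have := tl_tagged_cs G hr1 hr2 _ (htl12 ▸ hmem)
          simp at this)
        simp at hc0
      · rw [hs1] at hPT
        have hc0 := pin_per hPT (rawOK_no_cS G hraw _)
        simp at hc0
    · rw [hs1] at hPT
      have hc0 := pin_per hPT (rawOK_no_cS G hraw _)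
      simp at hc0
  -- ===== fR3 =====
  · simp only [fR3, Prod.mk.injEq] at heq
    obtain ⟨hB, hx2, hP2, hF2⟩ := heq
    subst hB; subst hx2; subst hP2; subst hF2
    have hTG : cS (.tg r) ∈ s₁ := hP _ rfl
    obtain ⟨h0, hh0, hcases⟩ := hrest
    rcases hcases with ⟨tl, hs1, hraw⟩ | ⟨r', hr', tl, hs1, hsub⟩ |
        ⟨r', hr', t1, t2, hs1, hr1, hr2, hff⟩ | ⟨r', hr', tl, hs1, hsub⟩ |
        ⟨t0, ht0, i, hiK, tl, hs1, hraw, hchk⟩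
    · rw [hs1] at h1
      obtain ⟨hc0, -, -⟩ := pin_cpu_raw G h1 hraw
      simp at hc0
    · rcases hsub with hraw | ⟨t1, t2, htl12, hr1, hr2⟩
      · rw [hs1] at h1
        obtain ⟨hc0, -, -⟩ := pin_cpu_raw G h1 hraw
        simp only [Ctl.pT.injEq] at hc0
        obtain ⟨rfl, rfl⟩ := hc0
        rw [hs1] at hTG
        rcases List.mem_cons.mp hTG with h3 | h3
        · exact absurd (cS_inj h3) (by simp)
        · exact absurd h3 (rawOK_no_cS G hraw _)
      · -- the real case
        rw [hs1, htl12] at h1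
        obtain ⟨hc0, hu, hv⟩ := pin_cpu_tag G h1 hr1 hr2 (by simp)
        simp only [Ctl.pT.injEq] at hc0
        obtain ⟨rfl, rfl⟩ := hc0
        subst hu
        constructor
        · refine Or.inr ⟨h0, hh0, Or.inr (Or.inr (Or.inl ⟨r', hr, t1, t2, ?_, hr1, hr2, ?_⟩))⟩
          · rw [h2, hv]; rfl
          · intro d hd2
            refine ⟨fun hds => hnf (hds ▸ hd2), fun hmem => ?_⟩
            refine hF _ ⟨d, hd2, rfl⟩ ?_
            rw [hs1, htl12]
            rcases List.mem_append.mp hmem with h3 | h3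
            · exact List.mem_cons_of_mem _ (List.mem_append.mpr (Or.inl h3))
            · exact List.mem_cons_of_mem _
                (List.mem_append.mpr (Or.inr (List.mem_cons_of_mem _ h3)))
        · left; rw [hs1, htl12, h2, hv]; rfl
    · rw [hs1] at h1
      obtain ⟨hc0, -, -⟩ := pin_cpu_tag G h1 hr1 hr2 (by simp)
      simp at hc0
    · rcases hsub with ⟨t1, t2, htl12, hr1, hr2, hffp⟩ | hraw
      · rw [hs1, htl12] at h1
        obtain ⟨hc0, -, -⟩ := pin_cpu_tag G h1 hr1 hr2 (by simp)
        simp at hc0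
      · rw [hs1] at h1
        obtain ⟨hc0, -, -⟩ := pin_cpu_raw G h1 hraw
        simp at hc0
    · rw [hs1] at h1
      obtain ⟨hc0, -, -⟩ := pin_cpu_raw G h1 hraw
      simp at hc0
  -- ===== fR4 =====
  · simp only [fR4, Prod.mk.injEq] at heq
    obtain ⟨hB, hx2, hP2, hF2⟩ := heq
    subst hB; subst hx2; subst hP2; subst hF2
    obtain ⟨h0, hh0, hcases⟩ := hrest
    rcases hcases with ⟨tl, hs1, hraw⟩ | ⟨r', hr', tl, hs1, hsub⟩ |
        ⟨r', hr', t1, t2, hs1, hr1, hr2, hff⟩ | ⟨r', hr', tl, hs1, hsub⟩ |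
        ⟨t0, ht0, i, hiK, tl, hs1, hraw, hchk⟩
    · rw [hs1] at h1
      obtain ⟨hc0, -, -⟩ := pin_cpu_raw G h1 hraw
      simp at hc0
    · rcases hsub with hraw | ⟨t1, t2, htl12, hr1, hr2⟩
      · rw [hs1] at h1
        obtain ⟨hc0, -, -⟩ := pin_cpu_raw G h1 hraw
        simp at hc0
      · rw [hs1, htl12] at h1
        obtain ⟨hc0, -, -⟩ := pin_cpu_tag G h1 hr1 hr2 (by simp)
        simp at hc0
    · -- the real case
      rw [hs1] at h1
      obtain ⟨hc0, hu, hv⟩ := pin_cpu_tag G h1 hr1 hr2 (by simp)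
      simp only [Ctl.pD.injEq] at hc0
      obtain ⟨rfl, rfl⟩ := hc0
      subst hu
      constructor
      · refine Or.inr ⟨h0, hh0, Or.inr (Or.inr (Or.inr (Or.inl ⟨r', hr,
          t1 ++ cS (.tg r') :: t2, ?_, Or.inl ⟨t1, t2, rfl, hr1, hr2, hff, ?_⟩⟩)))⟩
        · rw [h2, hv]; rfl
        · intro c hc
          by_cases hch : c = h0
          · exact Or.inl hch
          · right
            have hmem : emb c ∈ s₁ := hP _ ⟨c, ⟨hc, hch⟩, rfl⟩
            rw [hs1] at hmem
            rcases List.mem_cons.mp hmem with h3 | h3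
            · exact absurd h3 (emb_ne_cS _ _)
            · rcases List.mem_append.mp h3 with h4 | h4
              · exact List.mem_append.mpr (Or.inl h4)
              · rcases List.mem_cons.mp h4 with h5 | h5
                · exact absurd h5 (emb_ne_cS _ _)
                · exact List.mem_append.mpr (Or.inr h5)
      · left; rw [hs1, h2, hv]; rfl
    · rcases hsub with ⟨t1, t2, htl12, hr1, hr2, hffp⟩ | hraw
      · rw [hs1, htl12] at h1
        obtain ⟨hc0, -, -⟩ := pin_cpu_tag G h1 hr1 hr2 (by simp)
        simp at hc0
      · rw [hs1] at h1
        obtain ⟨hc0, -, -⟩ := pin_cpu_raw G h1 hraw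
        simp at hc0
    · rw [hs1] at h1
      obtain ⟨hc0, -, -⟩ := pin_cpu_raw G h1 hraw
      simp at hc0
  -- ===== fR5 =====
  · simp only [fR5, Prod.mk.injEq] at heq
    obtain ⟨hB, hx2, hP2, hF2⟩ := heq
    subst hB; subst hx2; subst hP2; subst hF2
    have hPE : cS (.pE r s) ∈ s₁ := hP _ rfl
    obtain ⟨h0, hh0, hcases⟩ := hrest
    rcases hcases with ⟨tl, hs1, hraw⟩ | ⟨r', hr', tl, hs1, hsub⟩ |
        ⟨r', hr', t1, t2, hs1, hr1, hr2, hff⟩ | ⟨r', hr', tl, hs1, hsub⟩ |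
        ⟨t0, ht0, i, hiK, tl, hs1, hraw, hchk⟩
    · rw [hs1] at hPE
      have hc0 := pin_per hPE (rawOK_no_cS G hraw _)
      simp at hc0
    · rcases hsub with hraw | ⟨t1, t2, htl12, hr1, hr2⟩
      · rw [hs1] at hPE
        have hc0 := pin_per hPE (rawOK_no_cS G hraw _)
        simp at hc0
      · rw [hs1] at hPE
        have hc0 := pin_per hPE (fun hmem => by
          have := tl_tagged_cs G hr1 hr2 _ (htl12 ▸ hmem)
          simp at this)
        simp at hc0
    · rw [hs1] at hPE
      have hc0 := pin_per hPE (fun hmem => by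
        have := tl_tagged_cs G hr1 hr2 _ hmem
        simp at this)
      simp at hc0
    · rcases hsub with ⟨t1, t2, htl12, hr1, hr2, hff, hfp⟩ | hraw
      · -- the real case
        rw [hs1] at hPE
        have hc0 := pin_per hPE (fun hmem => by
          have := tl_tagged_cs G hr1 hr2 _ (htl12 ▸ hmem)
          simp at this)
        simp only [Ctl.pE.injEq] at hc0
        obtain ⟨rfl, rfl⟩ := hc0
        rw [hs1, htl12] at h1
        rcases cons_eq_append_cases h1 with ⟨hu, hy, htlv⟩ | ⟨u', hu, htl'⟩
        · exact absurd (cS_inj hy) (by simp)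
        obtain ⟨ht1u, ht2v⟩ := unique_split (X := cS (.tg r')) htl'
          (rawOK_no_cS G hr1 _) (rawOK_no_cS G hr2 _)
        subst hu
        constructor
        · refine Or.inr ⟨h0, hh0, Or.inr (Or.inr (Or.inr (Or.inl ⟨r', hr,
            t1 ++ r'.2.1.map emb ++ t2, ?_, Or.inr ?_⟩)))⟩
          · rw [h2, ht1u, ht2v]; simp
          · rw [RawOK_append, RawOK_append]
            exact ⟨⟨hr1, RawOK_map_emb G (fun τ hτ => mem_SL_of_rhs G hr hτ)⟩, hr2⟩
        · right
          refine ⟨r'.1, r'.2.1, r'.2.2.1, r'.2.2.2, h0 :: t1.map unemb, t2.map unemb,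
            (by rw [show (r'.1, r'.2.1, r'.2.2.1, r'.2.2.2) = r' from rfl]; exact hr), ?_, ?_, ?_, ?_⟩
          · rw [hs1, htl12]
            simp only [List.map_cons, List.map_append, List.cons_append]
            rfl
          · rw [h2, ht1u, ht2v]
            simp only [List.map_cons, List.map_append, List.map_map,
              map_comp_unemb_emb, List.cons_append, List.append_assoc]
            rfl
          · intro c hc
            simp only [ite_false', mem_alph, List.mem_append, List.mem_cons]
            rcases hfp c hc with rfl | hmem
            · exact Or.inl (Or.inl rfl)
            · rcases List.mem_append.mp hmem with h4 | h4
              · exact Or.inl (Or.inr (mem_map_unemb_of_emb h4))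
              · exact Or.inr (mem_map_unemb_of_emb h4)
          · intro d hd2
            obtain ⟨hdne, hdnm⟩ := hff d hd2
            simp only [ite_false', mem_alph, List.mem_append, List.mem_cons]
            rintro ((rfl | h4) | h4)
            · exact hdne rfl
            · exact hdnm (List.mem_append.mpr (Or.inl (rawOK_unemb_mem G hr1 h4)))
            · exact hdnm (List.mem_append.mpr (Or.inr (rawOK_unemb_mem G hr2 h4)))
      · rw [hs1] at hPE
        have hc0 := pin_per hPE (rawOK_no_cS G hraw _)
        simp only [Ctl.pE.injEq] at hc0
        obtain ⟨rfl, rfl⟩ := hc0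
        rw [hs1] at h1
        rcases cons_eq_append_cases h1 with ⟨hu, hy, htlv⟩ | ⟨u', hu, htl'⟩
        · exact absurd (cS_inj hy) (by simp)
        · have hmem2 : cS (.tg r') ∈ tl := by
            rw [htl']
            exact List.mem_append.mpr (Or.inr List.mem_cons_self)
          exact absurd hmem2 (rawOK_no_cS G hraw _)
    · rw [hs1] at hPE
      have hc0 := pin_per hPE (rawOK_no_cS G hraw _)
      simp at hc0
  -- ===== fR6 =====
  · simp only [fR6, Prod.mk.injEq] at heq
    obtain ⟨hB, hx2, hP2, hF2⟩ := heq
    subst hB; subst hx2; subst hP2; subst hF2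
    have hTG : cS (.tg r) ∉ s₁ := hF _ rfl
    obtain ⟨h0, hh0, hcases⟩ := hrest
    rcases hcases with ⟨tl, hs1, hraw⟩ | ⟨r', hr', tl, hs1, hsub⟩ |
        ⟨r', hr', t1, t2, hs1, hr1, hr2, hff⟩ | ⟨r', hr', tl, hs1, hsub⟩ |
        ⟨t0, ht0, i, hiK, tl, hs1, hraw, hchk⟩
    · rw [hs1] at h1
      obtain ⟨hc0, -, -⟩ := pin_cpu_raw G h1 hraw
      simp at hc0
    · rcases hsub with hraw | ⟨t1, t2, htl12, hr1, hr2⟩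
      · rw [hs1] at h1
        obtain ⟨hc0, -, -⟩ := pin_cpu_raw G h1 hraw
        simp at hc0
      · rw [hs1, htl12] at h1
        obtain ⟨hc0, -, -⟩ := pin_cpu_tag G h1 hr1 hr2 (by simp)
        simp at hc0
    · rw [hs1] at h1
      obtain ⟨hc0, -, -⟩ := pin_cpu_tag G h1 hr1 hr2 (by simp)
      simp at hc0
    · rcases hsub with ⟨t1, t2, htl12, hr1, hr2, hff, hfp⟩ | hraw
      · rw [hs1, htl12] at h1
        obtain ⟨hc0, -, -⟩ := pin_cpu_tag G h1 hr1 hr2 (by simp)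
        simp only [Ctl.pE.injEq] at hc0
        obtain ⟨rfl, rfl⟩ := hc0
        exact absurd (by
          rw [hs1, htl12]
          exact List.mem_cons_of_mem _ (List.mem_append.mpr (Or.inr (by simp)))) hTG
      · -- the real case
        rw [hs1] at h1
        obtain ⟨hc0, hu, hv⟩ := pin_cpu_raw G h1 hraw
        simp only [Ctl.pE.injEq] at hc0
        obtain ⟨rfl, rfl⟩ := hc0
        subst hu
        constructor
        · exact Or.inr ⟨h0, hh0, Or.inl ⟨tl, by rw [h2, hv]; rfl, hraw⟩⟩
        · left; rw [hs1, h2, hv]; rfl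
    · rw [hs1] at h1
      obtain ⟨hc0, -, -⟩ := pin_cpu_raw G h1 hraw
      simp at hc0
  -- ===== fF1 =====
  · simp only [fF1, Prod.mk.injEq] at heq
    obtain ⟨hB, hx2, hP2, hF2⟩ := heq
    subst hB; subst hx2; subst hP2; subst hF2
    obtain ⟨h0, hh0, hcases⟩ := hrest
    rcases hcases with ⟨tl, hs1, hraw⟩ | ⟨r', hr', tl, hs1, hsub⟩ |
        ⟨r', hr', t1, t2, hs1, hr1, hr2, hff⟩ | ⟨r', hr', tl, hs1, hsub⟩ |
        ⟨t0, ht0, i, hiK, tl, hs1, hraw, hchk⟩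
    · -- the real case
      rw [hs1] at h1
      obtain ⟨hc0, hu, hv⟩ := pin_cpu_raw G h1 hraw
      simp only [Ctl.idle.injEq] at hc0
      subst hc0; subst hu
      constructor
      · refine Or.inr ⟨Sum.inr t, hh0, Or.inr (Or.inr (Or.inr (Or.inr
          ⟨t, rfl, 0, Nat.zero_le _, tl, by rw [h2, hv]; rfl, hraw,
            fun j hj => absurd hj (Nat.not_lt_zero j)⟩)))⟩
      · left; rw [hs1, h2, hv]; rfl
    · rcases hsub with hraw | ⟨t1, t2, htl12, hr1, hr2⟩
      · rw [hs1] at h1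
        obtain ⟨hc0, -, -⟩ := pin_cpu_raw G h1 hraw
        simp at hc0
      · rw [hs1, htl12] at h1
        obtain ⟨hc0, -, -⟩ := pin_cpu_tag G h1 hr1 hr2 (by simp)
        simp at hc0
    · rw [hs1] at h1
      obtain ⟨hc0, -, -⟩ := pin_cpu_tag G h1 hr1 hr2 (by simp)
      simp at hc0
    · rcases hsub with ⟨t1, t2, htl12, hr1, hr2, hffp⟩ | hraw
      · rw [hs1, htl12] at h1
        obtain ⟨hc0, -, -⟩ := pin_cpu_tag G h1 hr1 hr2 (by simp)
        simp at hc0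
      · rw [hs1] at h1
        obtain ⟨hc0, -, -⟩ := pin_cpu_raw G h1 hraw
        simp at hc0
    · rw [hs1] at h1
      obtain ⟨hc0, -, -⟩ := pin_cpu_raw G h1 hraw
      simp at hc0
  -- ===== fFS =====
  · simp only [fFS, Prod.mk.injEq] at heq
    obtain ⟨hB, hx2, hP2, hF2⟩ := heq
    subst hB; subst hx2; subst hP2; subst hF2
    have hiK2 : i < KK G := List.mem_range.mp hi
    have hGD : (CL G).getD i (dflt G) ∉ s₁ := hF _ rfl
    obtain ⟨h0, hh0, hcases⟩ := hrest
    rcases hcases with ⟨tl, hs1, hraw⟩ | ⟨r', hr', tl, hs1, hsub⟩ |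
        ⟨r', hr', t1, t2, hs1, hr1, hr2, hff⟩ | ⟨r', hr', tl, hs1, hsub⟩ |
        ⟨t0, ht0, i', hi'K, tl, hs1, hraw, hchk⟩
    · rw [hs1] at h1
      obtain ⟨hc0, -, -⟩ := pin_cpu_raw G h1 hraw
      simp at hc0
    · rcases hsub with hraw | ⟨t1, t2, htl12, hr1, hr2⟩
      · rw [hs1] at h1
        obtain ⟨hc0, -, -⟩ := pin_cpu_raw G h1 hraw
        simp at hc0
      · rw [hs1, htl12] at h1
        obtain ⟨hc0, -, -⟩ := pin_cpu_tag G h1 hr1 hr2 (by simp)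
        simp at hc0
    · rw [hs1] at h1
      obtain ⟨hc0, -, -⟩ := pin_cpu_tag G h1 hr1 hr2 (by simp)
      simp at hc0
    · rcases hsub with ⟨t1, t2, htl12, hr1, hr2, hffp⟩ | hraw
      · rw [hs1, htl12] at h1
        obtain ⟨hc0, -, -⟩ := pin_cpu_tag G h1 hr1 hr2 (by simp)
        simp at hc0
      · rw [hs1] at h1
        obtain ⟨hc0, -, -⟩ := pin_cpu_raw G h1 hraw
        simp at hc0
    · -- the real case
      rw [hs1] at h1
      obtain ⟨hc0, hu, hv⟩ := pin_cpu_raw G h1 hraw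
      simp only [Ctl.fchk.injEq] at hc0
      obtain ⟨rfl, rfl⟩ := hc0
      subst hu
      constructor
      · refine Or.inr ⟨h0, hh0, Or.inr (Or.inr (Or.inr (Or.inr
          ⟨t0, ht0, i' + 1, by omega, tl, by rw [h2, hv]; rfl, hraw, ?_⟩)))⟩
        intro j hj
        rcases Nat.lt_succ_iff_lt_or_eq.mp hj with hj2 | rfl
        · exact hchk j hj2
        · intro hmem
          exact hGD (by rw [hs1]; exact List.mem_cons_of_mem _ hmem)
      · left; rw [hs1, h2, hv]; rfl
  -- ===== fF3 =====
  · simp only [fF3, Prod.mk.injEq] at heq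
    obtain ⟨hB, hx2, hP2, hF2⟩ := heq
    subst hB; subst hx2; subst hP2; subst hF2
    obtain ⟨h0, hh0, hcases⟩ := hrest
    rcases hcases with ⟨tl, hs1, hraw⟩ | ⟨r', hr', tl, hs1, hsub⟩ |
        ⟨r', hr', t1, t2, hs1, hr1, hr2, hff⟩ | ⟨r', hr', tl, hs1, hsub⟩ |
        ⟨t0, ht0, i', hi'K, tl, hs1, hraw, hchk⟩
    · rw [hs1] at h1
      obtain ⟨hc0, -, -⟩ := pin_cpu_raw G h1 hraw
      simp at hc0
    · rcases hsub with hraw | ⟨t1, t2, htl12, hr1, hr2⟩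
      · rw [hs1] at h1
        obtain ⟨hc0, -, -⟩ := pin_cpu_raw G h1 hraw
        simp at hc0
      · rw [hs1, htl12] at h1
        obtain ⟨hc0, -, -⟩ := pin_cpu_tag G h1 hr1 hr2 (by simp)
        simp at hc0
    · rw [hs1] at h1
      obtain ⟨hc0, -, -⟩ := pin_cpu_tag G h1 hr1 hr2 (by simp)
      simp at hc0
    · rcases hsub with ⟨t1, t2, htl12, hr1, hr2, hffp⟩ | hraw
      · rw [hs1, htl12] at h1
        obtain ⟨hc0, -, -⟩ := pin_cpu_tag G h1 hr1 hr2 (by simp)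
        simp at hc0
      · rw [hs1] at h1
        obtain ⟨hc0, -, -⟩ := pin_cpu_raw G h1 hraw
        simp at hc0
    · -- the real case
      rw [hs1] at h1
      obtain ⟨hc0, hu, hv⟩ := pin_cpu_raw G h1 hraw
      simp only [Ctl.fchk.injEq] at hc0
      obtain ⟨rfl, rfl⟩ := hc0
      subst hu
      constructor
      · left
        intro σ hσ
        rw [h2, hv] at hσ
        rcases List.mem_cons.mp (by simpa using hσ) with rfl | h3
        · exact ⟨t0, rfl⟩
        · obtain ⟨τ, hτSL, rfl⟩ := hraw σ h3
          cases τ with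
          | inr t' => exact ⟨t', rfl⟩
          | inl A =>
            exfalso
            have hmemCL : emb (Sum.inl A) ∈ CL G := (mem_CL G).mpr ⟨A, rfl, hτSL⟩
            obtain ⟨j, hjlt, hjeq⟩ := List.getElem_of_mem hmemCL
            have := hchk j hjlt
            rw [List.getD_eq_getElem _ _ hjlt, hjeq] at this
            exact this h3
      · left; rw [hs1, h2, hv]; rfl


lemma sound {w : List T} (hw : w ∈ (G2 G).Lang true) : w ∈ G.Lang false := by
  have main : ∀ z, Relation.ReflTransGen ((G2 G).Step true) [Sum.inl (G2 G).start] z →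
      Inv G z ∧ Relation.ReflTransGen (G.Step false) [Sum.inl G.start] (z.map unemb) := by
    intro z hz
    induction hz with
    | refl =>
      constructor
      · exact Or.inr ⟨Sum.inl G.start, start_mem_SL G, Or.inl ⟨[], rfl, RawOK_nil G⟩⟩
      · exact Relation.ReflTransGen.refl
    | @tail b c hb hstep ih =>
      obtain ⟨hInv, hrtg⟩ := ih
      obtain ⟨hInv2, hstut⟩ := preserve G hInv hstep
      refine ⟨hInv2, ?_⟩
      rcases hstut with heq | hgs
      · rwa [← heq]
      · exact hrtg.tail hgs
  obtain ⟨-, hrtg⟩ := main _ hw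
  have hmm : (w.map Sum.inr).map (unemb (N := N)) = w.map Sum.inr := by
    rw [List.map_map]
    exact List.map_congr_left fun a _ => rfl
  exact (by rwa [hmm] at hrtg : w ∈ G.Lang false)

lemma G2_lang : (G2 G).Lang true = G.Lang false :=
  Set.ext fun w => ⟨fun h => sound G h, fun h => complete G h⟩

end SCGproof

/-- SC(1,1) = SC'(1,1). -/
theorem sc11_eq_sc11' (T : Type) : SC11 T = SC11' T := by
  ext L
  constructor
  · rintro ⟨N, G, rfl⟩
    exact ⟨N, SCGproof.toExcl G, SCGproof.toExcl_lang G⟩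
  · rintro ⟨N, G, rfl⟩
    exact ⟨SCGproof.NN N T, SCGproof.G2 G, SCGproof.G2_lang G⟩
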